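/- Let r be a positive integer and c ∈ ℝ. Suppose there exist an SOS polynomial σ ∈ ℝ[x_{ij} : i∈[m], j∈[n]] of degree ≤ 4r and polynomials λ_i, θ_j of degree ≤ 4r−2 such that L̃(x) − c = σ(x) + ∑_{i∈[m]} λ_i(x)·(μ_i − ∑_j x_{ij}²) + ∑_{j∈[n]} θ_j(x)·(ν_j − ∑_i x_{ij}²). Then L(π) − c belongs to the truncated preordering T(Π(μ,ν))_{2r}. In particular, every lower bound certified by the level-2r Putinar SOS relaxation of the squared-variable formulation is certified by the level-r Schmüdgen SOS relaxation of the original formulation. -/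

import Mathlib

open MvPolynomial

/-- The Riesz functional associated to a moment sequence `z`. -/
noncomputable def riesz {σ : Type*} (z : (σ →₀ ℕ) → ℝ) (p : MvPolynomial σ ℝ) : ℝ :=
  ∑ α ∈ p.support, MvPolynomial.coeff α p * z α

/-- The total degree (length) of a multi-index. -/
def mdeg {σ : Type*} (α : σ →₀ ℕ) : ℕ := α.sum fun _ e => e

/-- Positive semidefiniteness of the truncated localizing matrix `M_t(g z)`:
the associated quadratic form is nonnegative on coefficient vectors of
polynomials of degree at most `t`. -/
def locPSD {σ : Type*} (z : (σ →₀ ℕ) → ℝ) (g : MvPolynomial σ ℝ) (t : ℕ) : Prop :=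
  ∀ p : MvPolynomial σ ℝ, p.totalDegree ≤ t → 0 ≤ riesz z (g * p ^ 2)

/-- Vanishing of the truncated localizing matrix `M_t(g z)`: all entries are zero. -/
def locZero {σ : Type*} (z : (σ →₀ ℕ) → ℝ) (g : MvPolynomial σ ℝ) (t : ℕ) : Prop :=
  ∀ α β : σ →₀ ℕ, mdeg α ≤ t → mdeg β ≤ t →
    riesz z (g * monomial α 1 * monomial β 1) = 0

/-- The row-marginal polynomial `r_i(π) = ∑_j π_{ij} - μ_i`. -/
noncomputable def rowPoly (a b : ℕ) (μ : Fin a → ℝ) (i : Fin a) :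
    MvPolynomial (Fin a × Fin b) ℝ :=
  (∑ j, X (i, j)) - C (μ i)

/-- The column-marginal polynomial `c_j(π) = ∑_i π_{ij} - ν_j`. -/
noncomputable def colPoly (a b : ℕ) (ν : Fin b → ℝ) (j : Fin b) :
    MvPolynomial (Fin a × Fin b) ℝ :=
  (∑ i, X (i, j)) - C (ν j)

/-- The monomial `e_I = ∏_{(i,j) ∈ I} π_{ij}`. -/
noncomputable def eI {a b : ℕ} (I : Finset (Fin a × Fin b)) : MvPolynomial (Fin a × Fin b) ℝ :=
  ∏ q ∈ I, X q

/-- A probability vector: nonnegative entries summing to 1. -/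
def IsProbVec {a : ℕ} (μ : Fin a → ℝ) : Prop := (∀ i, 0 ≤ μ i) ∧ ∑ i, μ i = 1

/-- Feasibility for the level-`r` Schmüdgen moment relaxation (S-DGW-r). -/
def SFeas (a b r : ℕ) (μ : Fin a → ℝ) (ν : Fin b → ℝ)
    (z : ((Fin a × Fin b) →₀ ℕ) → ℝ) : Prop :=
  z 0 = 1 ∧
  (∀ I : Finset (Fin a × Fin b), I.card ≤ 2 * r → locPSD z (eI I) (r - (I.card + 1) / 2)) ∧
  (∀ i, locZero z (rowPoly a b μ i) (r - 1)) ∧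
  (∀ j, locZero z (colPoly a b ν j) (r - 1)) ∧
  (∀ i₁ i₂ : Fin a, ∀ j : Fin b, locZero z (rowPoly a b μ i₁ * X (i₂, j)) (r - 1)) ∧
  (∀ j₁ j₂ : Fin b, ∀ i : Fin a, locZero z (colPoly a b ν j₁ * X (i, j₂)) (r - 1))

/-- The objective of the Schmüdgen moment relaxation. -/
noncomputable def objS (a b : ℕ) (L : Fin a → Fin b → Fin a → Fin b → ℝ)
    (z : ((Fin a × Fin b) →₀ ℕ) → ℝ) : ℝ :=
  ∑ i, ∑ j, ∑ k, ∑ l, L i j k l * z (Finsupp.single (i, j) 1 + Finsupp.single (k, l) 1)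

/-- The optimal value of the level-`r` Schmüdgen moment relaxation. -/
noncomputable def valS (a b r : ℕ) (μ : Fin a → ℝ) (ν : Fin b → ℝ)
    (L : Fin a → Fin b → Fin a → Fin b → ℝ) : ℝ :=
  sInf {v : ℝ | ∃ z, SFeas a b r μ ν z ∧ v = objS a b L z}

/-- A polynomial is SOS if it is a finite sum of squares of polynomials. -/
def IsSOS {σ : Type*} (p : MvPolynomial σ ℝ) : Prop :=
  ∃ (k : ℕ) (q : Fin k → MvPolynomial σ ℝ), p = ∑ i, q i ^ 2

/-- Membership in the truncated preordering `T(Π(μ,ν))_{2r}`. -/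
def InPreT (a b r : ℕ) (μ : Fin a → ℝ) (ν : Fin b → ℝ)
    (f : MvPolynomial (Fin a × Fin b) ℝ) : Prop :=
  ∃ (σ0 : MvPolynomial (Fin a × Fin b) ℝ)
    (σI : Finset (Fin a × Fin b) → MvPolynomial (Fin a × Fin b) ℝ)
    (lam : Fin a → MvPolynomial (Fin a × Fin b) ℝ)
    (th : Fin b → MvPolynomial (Fin a × Fin b) ℝ),
    IsSOS σ0 ∧ σ0.totalDegree ≤ 2 * r ∧
    (∀ I, IsSOS (σI I) ∧ (eI I * σI I).totalDegree ≤ 2 * r) ∧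
    (∀ i, (lam i).totalDegree ≤ 2 * r - 1) ∧
    (∀ j, (th j).totalDegree ≤ 2 * r - 1) ∧
    f = σ0 + ∑ I : Finset (Fin a × Fin b), eI I * σI I
        + ∑ i, lam i * rowPoly a b μ i + ∑ j, th j * colPoly a b ν j

/-- The GW cost as a quadratic polynomial in the variables `π_{ij}`. -/
noncomputable def Lpoly (a b : ℕ) (L : Fin a → Fin b → Fin a → Fin b → ℝ) :
    MvPolynomial (Fin a × Fin b) ℝ :=
  ∑ i, ∑ j, ∑ k, ∑ l, C (L i j k l) * X (i, j) * X (k, l)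

/-- The Schmüdgen SOS lower bound `lb(L, T(Π(μ,ν)))_r`. -/
noncomputable def lbS (a b r : ℕ) (μ : Fin a → ℝ) (ν : Fin b → ℝ)
    (L : Fin a → Fin b → Fin a → Fin b → ℝ) : ℝ :=
  sSup {c : ℝ | InPreT a b r μ ν (Lpoly a b L - C c)}

/-- The squared-variable GW objective `L̃(x) = ∑ L_{ij,kl} x_{ij}² x_{kl}²`. -/
noncomputable def Ltilde (a b : ℕ) (L : Fin a → Fin b → Fin a → Fin b → ℝ) :
    MvPolynomial (Fin a × Fin b) ℝ :=
  ∑ i, ∑ j, ∑ k, ∑ l, C (L i j k l) * X (i, j) ^ 2 * X (k, l) ^ 2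

open MvPolynomial Classical
noncomputable section Aux2
variable {τ : Type*}

def halfIdx (α : τ →₀ ℕ) : τ →₀ ℕ := α.mapRange (· / 2) (by simp)
def dblIdx (α : τ →₀ ℕ) : τ →₀ ℕ := α.mapRange (2 * ·) (by simp)
def parIdx (α : τ →₀ ℕ) : Finset τ := α.support.filter fun q => Odd (α q)
def indicIdx (I : Finset τ) : τ →₀ ℕ :=
  ⟨I, fun q => if q ∈ I then 1 else 0, by intro q; by_cases h : q ∈ I <;> simp [h]⟩

@[simp] lemma halfIdx_apply (α : τ →₀ ℕ) (q : τ) : halfIdx α q = α q / 2 := rfl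
@[simp] lemma dblIdx_apply (α : τ →₀ ℕ) (q : τ) : dblIdx α q = 2 * α q := rfl
@[simp] lemma indicIdx_apply (I : Finset τ) (q : τ) :
    indicIdx I q = if q ∈ I then 1 else 0 := rfl

lemma mem_parIdx {α : τ →₀ ℕ} {q : τ} : q ∈ parIdx α ↔ Odd (α q) := by
  simp only [parIdx, Finset.mem_filter, Finsupp.mem_support_iff]
  constructor
  · exact fun h => h.2
  · intro h
    refine ⟨?_, h⟩
    rcases h with ⟨k, hk⟩
    omega

lemma decompIdx (α : τ →₀ ℕ) : dblIdx (halfIdx α) + indicIdx (parIdx α) = α := by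
  ext q
  simp only [Finsupp.add_apply, dblIdx_apply, halfIdx_apply, indicIdx_apply, mem_parIdx]
  by_cases h : Odd (α q)
  · rw [if_pos h]; obtain ⟨k, hk⟩ := h; omega
  · rw [if_neg h]; rw [Nat.not_odd_iff_even] at h; obtain ⟨k, hk⟩ := h; omega

lemma mdegf_add (α β : τ →₀ ℕ) :
    ((α + β).sum fun _ e => e) = (α.sum fun _ e => e) + (β.sum fun _ e => e) :=
  Finsupp.sum_add_index' (fun _ => rfl) (fun _ _ _ => rfl)

lemma mdegf_dbl (α : τ →₀ ℕ) :
    ((dblIdx α).sum fun _ e => e) = 2 * (α.sum fun _ e => e) := by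
  rw [dblIdx, Finsupp.sum_mapRange_index (fun _ => rfl), Finsupp.mul_sum]

lemma mdegf_indic (I : Finset τ) :
    ((indicIdx I).sum fun _ e => e) = I.card := by
  rw [Finsupp.sum]
  have hs : (indicIdx I).support = I := rfl
  rw [hs]
  simp only [indicIdx_apply]
  rw [show ∑ q ∈ I, (if q ∈ I then (1:ℕ) else 0) = ∑ _q ∈ I, (1:ℕ) from
    Finset.sum_congr rfl (fun q hq => if_pos hq)]
  simp

lemma mdegf_split (α : τ →₀ ℕ) :
    (α.sum fun _ e => e) = 2 * ((halfIdx α).sum fun _ e => e) + (parIdx α).card := by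
  conv_lhs => rw [← decompIdx α]
  rw [mdegf_add, mdegf_dbl, mdegf_indic]

/-- Parity-extraction linear map: `monomial α c ↦ monomial (α/2) c` if `par α = I`, else 0. -/
noncomputable def psiPar (I : Finset τ) : MvPolynomial τ ℝ →ₗ[ℝ] MvPolynomial τ ℝ :=
  (Finsupp.lsum ℝ fun α => if parIdx α = I then (monomial (halfIdx α) : ℝ →ₗ[ℝ] _) else 0) ∘ₗ
    (AddMonoidAlgebra.coeffLinearEquiv ℝ).toLinearMap

lemma psiPar_monomial (I : Finset τ) (α : τ →₀ ℕ) (c : ℝ) :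
    psiPar I (monomial α c) = if parIdx α = I then monomial (halfIdx α) c else 0 := by
  rw [psiPar, LinearMap.comp_apply]
  have hs : (AddMonoidAlgebra.coeffLinearEquiv ℝ).toLinearMap (monomial α c) =
      Finsupp.single α c := by
    ext β; simp only [Finsupp.single_apply]; exact coeff_monomial β α c
  rw [hs, Finsupp.lsum_single]
  by_cases h : parIdx α = I <;> simp [h, single_eq_monomial]

/-- squaring substitution `X q ↦ X q ^ 2`. -/
noncomputable def phiSq : MvPolynomial τ ℝ →ₐ[ℝ] MvPolynomial τ ℝ :=
  aeval fun q => X q ^ 2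

lemma phiSq_monomial (β : τ →₀ ℕ) (b : ℝ) :
    phiSq (monomial β b) = monomial (dblIdx β) b := by
  rw [phiSq, aeval_monomial, monomial_eq]
  congr 1
  rw [dblIdx, Finsupp.prod_mapRange_index (by simp)]
  exact Finsupp.prod_congr fun q _ => by rw [← pow_mul]

lemma parIdx_dbl_add (β α : τ →₀ ℕ) : parIdx (dblIdx β + α) = parIdx α := by
  ext q
  simp only [mem_parIdx, Finsupp.add_apply, dblIdx_apply, Nat.odd_iff]
  omega

lemma halfIdx_dbl_add (β α : τ →₀ ℕ) : halfIdx (dblIdx β + α) = β + halfIdx α := by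
  ext q
  simp only [halfIdx_apply, Finsupp.add_apply, dblIdx_apply]
  omega

lemma psiPar_phiSq_mul (I : Finset τ) (p q : MvPolynomial τ ℝ) :
    psiPar I (phiSq p * q) = p * psiPar I q := by
  induction p using MvPolynomial.induction_on' with
  | add p₁ p₂ h1 h2 => rw [map_add, add_mul, map_add, h1, h2, add_mul]
  | monomial β b =>
    induction q using MvPolynomial.induction_on' with
    | add q₁ q₂ g1 g2 => rw [mul_add, map_add, g1, g2, map_add, mul_add]
    | monomial α a =>
      rw [phiSq_monomial, monomial_mul, psiPar_monomial, psiPar_monomial,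
        parIdx_dbl_add, halfIdx_dbl_add]
      by_cases h : parIdx α = I
      · rw [if_pos h, if_pos h, monomial_mul]
      · rw [if_neg h, if_neg h, mul_zero]

lemma psiPar_phiSq (p : MvPolynomial τ ℝ) : psiPar ∅ (phiSq p) = p := by
  have h := psiPar_phiSq_mul ∅ p 1
  rw [mul_one] at h
  rw [h, show (1 : MvPolynomial τ ℝ) = monomial 0 1 from rfl, psiPar_monomial]
  have hp : parIdx (0 : τ →₀ ℕ) = ∅ := by
    ext q; simp [mem_parIdx]
  have hh : halfIdx (0 : τ →₀ ℕ) = 0 := by ext q; simp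
  rw [if_pos hp, hh]
  simp [monomial_zero']

lemma indicIdx_insert {q : τ} {I : Finset τ} (h : q ∉ I) :
    indicIdx (insert q I) = Finsupp.single q 1 + indicIdx I := by
  ext x
  simp only [indicIdx_apply, Finsupp.add_apply, Finsupp.single_apply, Finset.mem_insert]
  by_cases hx : x = q
  · subst hx; simp [h]
  · simp [hx, Ne.symm hx]

lemma eI_eq_monomial {a b : ℕ} (I : Finset (Fin a × Fin b)) :
    eI I = monomial (indicIdx I) 1 := by
  rw [eI, monomial_eq, C_1, one_mul, Finsupp.prod]
  have hs : (indicIdx I).support = I := rfl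
  rw [hs]
  exact (Finset.prod_congr rfl fun q hq => by
    simp only [indicIdx_apply, if_pos hq, pow_one]).symm

lemma decompPoly [Fintype τ] (p : MvPolynomial τ ℝ) :
    p = ∑ I : Finset τ, phiSq (psiPar I p) * (monomial (indicIdx I) 1) := by
  induction p using MvPolynomial.induction_on' with
  | add p₁ p₂ h1 h2 =>
    conv_lhs => rw [h1, h2]
    rw [← Finset.sum_add_distrib]
    exact Finset.sum_congr rfl fun I _ => by rw [map_add, map_add, add_mul]
  | monomial α a =>
    have key : ∀ I : Finset τ, phiSq (psiPar I (monomial α a)) * monomial (indicIdx I) 1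
        = if parIdx α = I then monomial α a else 0 := by
      intro I
      rw [psiPar_monomial]
      by_cases h : parIdx α = I
      · rw [if_pos h, if_pos h, phiSq_monomial, monomial_mul, mul_one, ← h, decompIdx]
      · rw [if_neg h, if_neg h, map_zero, zero_mul]
    rw [Finset.sum_congr rfl fun I _ => key I,
      Finset.sum_ite_eq (Finset.univ : Finset (Finset τ)) (parIdx α) fun _ => monomial α a]
    simp

lemma parIdx_indic_add_eq_empty_iff (I J : Finset τ) :
    parIdx (indicIdx I + indicIdx J) = ∅ ↔ I = J := by
  constructor
  · intro h
    ext q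
    have hq : q ∉ parIdx (indicIdx I + indicIdx J) := by rw [h]; exact Finset.notMem_empty q
    rw [mem_parIdx] at hq
    simp only [Finsupp.add_apply, indicIdx_apply, Nat.odd_iff] at hq
    by_cases hI : q ∈ I <;> by_cases hJ : q ∈ J <;> simp [hI, hJ] at hq ⊢
  · rintro rfl
    ext q
    simp only [mem_parIdx, Finsupp.add_apply, indicIdx_apply, Nat.odd_iff,
      Finset.notMem_empty, iff_false]
    by_cases hI : q ∈ I <;> simp [hI]

lemma psiPar_empty_sq_mul (u v : MvPolynomial τ ℝ) (I J : Finset τ) :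
    psiPar ∅ ((phiSq u * monomial (indicIdx I) 1) * (phiSq v * monomial (indicIdx J) 1)) =
      if I = J then u * v * monomial (indicIdx I) 1 else 0 := by
  have h1 : (phiSq u * monomial (indicIdx I) 1) * (phiSq v * monomial (indicIdx J) 1) =
      phiSq (u * v) * monomial (indicIdx I + indicIdx J) 1 := by
    rw [map_mul, show monomial (indicIdx I + indicIdx J) (1:ℝ) =
      monomial (indicIdx I) 1 * monomial (indicIdx J) 1 by rw [monomial_mul, mul_one]]
    ring
  rw [h1, psiPar_phiSq_mul, psiPar_monomial]
  by_cases h : I = J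
  · subst h
    rw [if_pos ((parIdx_indic_add_eq_empty_iff I I).mpr rfl), if_pos rfl]
    have : halfIdx (indicIdx I + indicIdx I) = indicIdx I := by
      ext q; simp only [halfIdx_apply, Finsupp.add_apply]; omega
    rw [this]
  · rw [if_neg (fun hc => h ((parIdx_indic_add_eq_empty_iff I J).mp hc)), if_neg h, mul_zero]

lemma psiPar_sq {a b : ℕ} (p : MvPolynomial (Fin a × Fin b) ℝ) :
    psiPar ∅ (p ^ 2) = ∑ I : Finset (Fin a × Fin b), eI I * (psiPar I p) ^ 2 := by
  have h0 : p ^ 2 = ∑ I : Finset (Fin a × Fin b), ∑ J : Finset (Fin a × Fin b),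
      (phiSq (psiPar I p) * monomial (indicIdx I) 1) *
        (phiSq (psiPar J p) * monomial (indicIdx J) 1) := by
    conv_lhs => rw [sq, decompPoly p]
    rw [Finset.sum_mul_sum]
  have h1 : psiPar ∅ (p ^ 2) = ∑ I : Finset (Fin a × Fin b), ∑ J : Finset (Fin a × Fin b),
      psiPar ∅ ((phiSq (psiPar I p) * monomial (indicIdx I) 1) *
        (phiSq (psiPar J p) * monomial (indicIdx J) 1)) := by
    rw [h0, map_sum]
    exact Finset.sum_congr rfl fun I _ => map_sum (psiPar ∅) _ Finset.univ
  rw [h1]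
  refine Finset.sum_congr rfl fun I _ => ?_
  rw [Finset.sum_eq_single I]
  · rw [psiPar_empty_sq_mul, if_pos rfl, eI_eq_monomial, sq]
    ring
  · intro J _ hJ
    rw [psiPar_empty_sq_mul, if_neg fun h => hJ h.symm]
  · intro h
    exact absurd (Finset.mem_univ I) h

lemma degreef_add (α β : τ →₀ ℕ) : (α + β).degree = α.degree + β.degree := by
  show ((α + β).sum fun _ e => e) = (α.sum fun _ e => e) + (β.sum fun _ e => e)
  exact mdegf_add α β

lemma psiPar_eq_sum (I : Finset τ) (p : MvPolynomial τ ℝ) :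
    psiPar I p = ∑ α ∈ p.support,
      if parIdx α = I then monomial (halfIdx α) (coeff α p) else 0 := by
  conv_lhs => rw [p.as_sum, map_sum]
  exact Finset.sum_congr rfl fun α _ => psiPar_monomial I α (coeff α p)

lemma support_psiPar (I : Finset τ) (p : MvPolynomial τ ℝ) {δ : τ →₀ ℕ}
    (hδ : δ ∈ (psiPar I p).support) :
    ∃ α ∈ p.support, parIdx α = I ∧ δ = halfIdx α := by
  by_contra hcon
  push_neg at hcon
  apply (Finsupp.mem_support_iff.mp hδ)
  show coeff δ (psiPar I p) = 0
  rw [psiPar_eq_sum, coeff_sum]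
  refine Finset.sum_eq_zero fun α hα => ?_
  by_cases h : parIdx α = I
  · rw [if_pos h, coeff_monomial]
    rcases eq_or_ne (halfIdx α) δ with he | he
    · exact absurd he.symm (hcon α hα h)
    · rw [if_neg he]
  · rw [if_neg h]
    rfl

lemma mdeg_psiPar_le (I : Finset τ) (p : MvPolynomial τ ℝ) {δ : τ →₀ ℕ}
    (hδ : δ ∈ (psiPar I p).support) :
    2 * (δ.sum fun _ e => e) + I.card ≤ p.totalDegree := by
  obtain ⟨α, hα, hpar, rfl⟩ := support_psiPar I p hδ
  rw [← hpar, ← mdegf_split]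
  exact le_totalDegree hα

lemma totalDegree_psiPar_empty_le (p : MvPolynomial τ ℝ) :
    (psiPar ∅ p).totalDegree ≤ p.totalDegree / 2 := by
  rw [totalDegree]
  refine Finset.sup_le fun δ hδ => ?_
  have := mdeg_psiPar_le ∅ p hδ
  simp only [Finset.card_empty, add_zero] at this
  omega

lemma totalDegree_eI_mul_sq_le {a b : ℕ} (I : Finset (Fin a × Fin b))
    (q : MvPolynomial (Fin a × Fin b) ℝ) :
    (eI I * (psiPar I q) ^ 2).totalDegree ≤ q.totalDegree := by
  by_cases hu : psiPar I q = 0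
  · simp [hu]
  · obtain ⟨δ, hδ, hsup⟩ := (psiPar I q).support.exists_mem_eq_sup
      (MvPolynomial.support_nonempty.mpr hu) fun s => s.sum fun _ e => e
    have hmd := mdeg_psiPar_le I q hδ
    have h1 : (eI I).totalDegree ≤ I.card := by
      rw [eI_eq_monomial]
      exact (totalDegree_monomial_le _ _).trans (le_of_eq (mdegf_indic I))
    have h2 : ((psiPar I q) ^ 2).totalDegree ≤ 2 * (psiPar I q).totalDegree := by
      simpa [two_mul] using totalDegree_pow (psiPar I q) 2
    have h3 : (psiPar I q).totalDegree = δ.sum fun _ e => e := hsup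
    calc (eI I * (psiPar I q) ^ 2).totalDegree
        ≤ (eI I).totalDegree + ((psiPar I q) ^ 2).totalDegree := totalDegree_mul _ _
      _ ≤ I.card + 2 * (δ.sum fun _ e => e) := by rw [h3] at h2; omega
      _ ≤ q.totalDegree := by omega

/-- sum of squares of real mv-polynomials vanishes iff each term vanishes -/
lemma sq_sum_zero {κ : Type*} [Fintype κ] {τ' : Type*} (f : κ → MvPolynomial τ' ℝ)
    (h : ∑ k, (f k) ^ 2 = 0) (k : κ) : f k = 0 := by
  apply MvPolynomial.funext
  intro x
  have hx : ∑ k, (eval x (f k)) ^ 2 = 0 := by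
    have h2 := congrArg (eval x) h
    rw [map_sum, map_zero] at h2
    simpa [map_pow] using h2
  have hk : ∀ k ∈ Finset.univ, (0:ℝ) ≤ (eval x (f k)) ^ 2 := fun k _ => sq_nonneg _
  have := (Finset.sum_eq_zero_iff_of_nonneg hk).mp hx k (Finset.mem_univ k)
  simpa using pow_eq_zero_iff (n := 2) (by norm_num) |>.mp this

lemma hc_sq {τ' : Type*} (q : MvPolynomial τ' ℝ) {D : ℕ} (hq : q.totalDegree ≤ D) :
    homogeneousComponent (2 * D) (q ^ 2) = (homogeneousComponent D q) ^ 2 := by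
  ext α
  rw [coeff_homogeneousComponent, sq, sq, coeff_mul, coeff_mul]
  by_cases hα : α.degree = 2 * D
  · rw [if_pos hα]
    refine Finset.sum_congr rfl fun ⟨β, γ⟩ hbg => ?_
    rw [Finset.HasAntidiagonal.mem_antidiagonal] at hbg
    have hdeg : β.degree + γ.degree = 2 * D := by
      rw [← hα, ← hbg]
      exact (degreef_add β γ).symm
    simp only [coeff_homogeneousComponent]
    by_cases hβ : β.degree = D
    · have hγ : γ.degree = D := by omega
      rw [if_pos hβ, if_pos hγ]
    · rcases lt_or_gt_of_ne hβ with hlt | hgt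
      · have hγ : D < γ.degree := by omega
        have hc0 : coeff γ q = 0 := coeff_eq_zero_of_totalDegree_lt (lt_of_le_of_lt hq hγ)
        simp [hc0, hβ]
      · have hc0 : coeff β q = 0 := coeff_eq_zero_of_totalDegree_lt (lt_of_le_of_lt hq hgt)
        simp [hc0, hβ]
  · rw [if_neg hα]
    refine (Finset.sum_eq_zero fun ⟨β, γ⟩ hbg => ?_).symm
    rw [Finset.HasAntidiagonal.mem_antidiagonal] at hbg
    simp only [coeff_homogeneousComponent]
    by_cases hβ : β.degree = D
    · by_cases hγ : γ.degree = D
      · exfalso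
        apply hα
        rw [← hbg, degreef_add, hβ, hγ]
        omega
      · rw [if_neg hγ, mul_zero]
    · rw [if_neg hβ, zero_mul]

lemma hc_top_ne_zero {τ' : Type*} {q : MvPolynomial τ' ℝ} (hq : q ≠ 0) :
    homogeneousComponent q.totalDegree q ≠ 0 := by
  obtain ⟨α, hα, hsup⟩ := q.support.exists_mem_eq_sup
    (MvPolynomial.support_nonempty.mpr hq) fun s => s.sum fun _ e => e
  intro h0
  have : coeff α (homogeneousComponent q.totalDegree q) = coeff α q := by
    rw [coeff_homogeneousComponent, if_pos]
    exact (congrArg _ (rfl)).trans hsup.symm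
  rw [h0] at this
  exact MvPolynomial.mem_support_iff.mp hα (by simpa using this.symm)

lemma sos_deg_le {κ : Type*} [Fintype κ] {τ' : Type*} (q : κ → MvPolynomial τ' ℝ) (k : κ) :
    2 * (q k).totalDegree ≤ (∑ j, (q j) ^ 2).totalDegree := by
  set D := Finset.univ.sup fun j => (q j).totalDegree with hD
  have hk : (q k).totalDegree ≤ D :=
    Finset.le_sup (f := fun j => (q j).totalDegree) (Finset.mem_univ k)
  rcases Nat.eq_zero_or_pos D with h0 | hpos
  · omega
  obtain ⟨k1, _, hk1⟩ := Finset.exists_mem_eq_sup Finset.univ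
    (Finset.univ_nonempty_iff.mpr ⟨k⟩) fun j => (q j).totalDegree
  have hq1 : q k1 ≠ 0 := by
    intro h
    rw [h] at hk1
    simp only [totalDegree_zero] at hk1
    omega
  by_contra hcon
  push_neg at hcon
  have h2D : (∑ j, (q j) ^ 2).totalDegree < 2 * D := lt_of_lt_of_le hcon (by omega)
  have hz : homogeneousComponent (2 * D) (∑ j, (q j) ^ 2) = 0 :=
    homogeneousComponent_eq_zero _ _ h2D
  rw [map_sum] at hz
  have hz' : ∑ j, (homogeneousComponent D (q j)) ^ 2 = 0 := by
    rw [← hz]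
    exact Finset.sum_congr rfl fun j _ =>
      (hc_sq (q j) (Finset.le_sup (f := fun j => (q j).totalDegree) (Finset.mem_univ j))).symm
  have := sq_sum_zero _ hz' k1
  exact hc_top_ne_zero hq1 (by rwa [hD.trans hk1] at this)

lemma phiSq_Lpoly (a b : ℕ) (L : Fin a → Fin b → Fin a → Fin b → ℝ) :
    phiSq (Lpoly a b L) = Ltilde a b L := by
  rw [Lpoly, Ltilde, map_sum]
  refine Finset.sum_congr rfl fun i _ => ?_
  rw [map_sum]
  refine Finset.sum_congr rfl fun j _ => ?_
  rw [map_sum]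
  refine Finset.sum_congr rfl fun k _ => ?_
  rw [map_sum]
  refine Finset.sum_congr rfl fun l _ => ?_
  rw [map_mul, map_mul]
  simp [phiSq]

lemma phiSq_neg_row (a b : ℕ) (μ : Fin a → ℝ) (i : Fin a) :
    phiSq (-(rowPoly a b μ i)) = C (μ i) - ∑ j, X (i, j) ^ 2 := by
  rw [rowPoly, map_neg, map_sub, map_sum]
  simp [phiSq]

lemma phiSq_neg_col (a b : ℕ) (ν : Fin b → ℝ) (j : Fin b) :
    phiSq (-(colPoly a b ν j)) = C (ν j) - ∑ i, X (i, j) ^ 2 := by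
  rw [colPoly, map_neg, map_sub, map_sum]
  simp [phiSq]

end Aux2

/-- If `L̃(x) − c` has a Putinar certificate of degree `4r` in the squared
variables, then `L(π) − c` belongs to the truncated preordering `T(Π(μ,ν))_{2r}`. -/
theorem stmt4 (m n r : ℕ) (hm : 0 < m) (hn : 0 < n) (hr : 0 < r)
    (μ : Fin m → ℝ) (ν : Fin n → ℝ) (hμ : IsProbVec μ) (hν : IsProbVec ν)
    (L : Fin m → Fin n → Fin m → Fin n → ℝ) (c : ℝ)
    (σ0 : MvPolynomial (Fin m × Fin n) ℝ)
    (lam : Fin m → MvPolynomial (Fin m × Fin n) ℝ)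
    (th : Fin n → MvPolynomial (Fin m × Fin n) ℝ)
    (hσ0 : IsSOS σ0) (hσ0deg : σ0.totalDegree ≤ 4 * r)
    (hlamdeg : ∀ i, (lam i).totalDegree ≤ 4 * r - 2)
    (hthdeg : ∀ j, (th j).totalDegree ≤ 4 * r - 2)
    (hcert : Ltilde m n L - C c =
      σ0 + ∑ i, lam i * (C (μ i) - ∑ j, X (i, j) ^ 2)
         + ∑ j, th j * (C (ν j) - ∑ i, X (i, j) ^ 2)) :
    InPreT m n r μ ν (Lpoly m n L - C c) := by
  obtain ⟨K, q, hq⟩ := hσ0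
  have hqdeg : ∀ k, (q k).totalDegree ≤ 2 * r := by
    intro k
    have h1 := sos_deg_le q k
    rw [← hq] at h1
    omega
  refine ⟨0, fun I => ∑ k, (psiPar I (q k)) ^ 2,
    fun i => -(psiPar ∅ (lam i)), fun j => -(psiPar ∅ (th j)),
    ⟨0, fun _ => 0, by simp⟩, by simp, ?_, ?_, ?_, ?_⟩
  · intro I
    refine ⟨⟨K, fun k => psiPar I (q k), rfl⟩, ?_⟩
    rw [Finset.mul_sum]
    refine (totalDegree_finset_sum _ _).trans (Finset.sup_le fun k _ => ?_)
    exact (totalDegree_eI_mul_sq_le I (q k)).trans (hqdeg k)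
  · intro i
    rw [totalDegree_neg]
    refine (totalDegree_psiPar_empty_le (lam i)).trans ?_
    have := hlamdeg i
    omega
  · intro j
    rw [totalDegree_neg]
    refine (totalDegree_psiPar_empty_le (th j)).trans ?_
    have := hthdeg j
    omega
  · -- the identity
    have happly := congrArg (psiPar ∅) hcert
    have hL : psiPar ∅ (Ltilde m n L - C c) = Lpoly m n L - C c := by
      rw [← phiSq_Lpoly, show (C c : MvPolynomial (Fin m × Fin n) ℝ) = phiSq (C c) by
        simp [phiSq], ← map_sub, psiPar_phiSq]
      simp [phiSq]
    have hσ : psiPar ∅ σ0 = ∑ I : Finset (Fin m × Fin n), eI I * ∑ k, (psiPar I (q k)) ^ 2 := by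
      rw [hq, map_sum]
      rw [Finset.sum_congr rfl fun k _ => psiPar_sq (q k)]
      rw [Finset.sum_comm]
      exact Finset.sum_congr rfl fun I _ => by rw [Finset.mul_sum]
    have hrow : ∀ i, psiPar ∅ (lam i * (C (μ i) - ∑ j, X (i, j) ^ 2)) =
        -(psiPar ∅ (lam i)) * rowPoly m n μ i := by
      intro i
      rw [← phiSq_neg_row, mul_comm, psiPar_phiSq_mul]
      ring
    have hcol : ∀ j, psiPar ∅ (th j * (C (ν j) - ∑ i, X (i, j) ^ 2)) =
        -(psiPar ∅ (th j)) * colPoly m n ν j := by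
      intro j
      rw [← phiSq_neg_col, mul_comm, psiPar_phiSq_mul]
      ring
    rw [hL, map_add, map_add, map_sum, map_sum, hσ] at happly
    rw [Finset.sum_congr rfl (fun i _ => hrow i), Finset.sum_congr rfl (fun j _ => hcol j)]
      at happly
    rw [happly, zero_add]
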